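/- Equivalence theorem: B is a skipping simulation on a transition system M if and only if B is a well-founded skipping relation on M. -/

import Mathlib

universe u v

section Defs

variable {S : Type u} {T : Type v}

/-- A fullpath of the transition relation `R`. -/
def FullPath (R : S → S → Prop) (σ : ℕ → S) : Prop := ∀ i, R (σ i) (σ (i+1))

/-- Strictly increasing sequences of naturals starting at 0. -/
def IsINC (π : ℕ → ℕ) : Prop := StrictMono π ∧ π 0 = 0

/-- Every element of the i-th segment of `σ` (w.r.t. `π`) is `B`-related to the
first element of the i-th segment of `δ` (w.r.t. `ξ`). -/
def Corr (B : S → T → Prop) (σ : ℕ → S) (π : ℕ → ℕ) (δ : ℕ → T) (ξ : ℕ → ℕ) : Prop :=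
  ∀ i n, π i ≤ n → n < π (i+1) → B (σ n) (δ (ξ i))

/-- `σ` matches `δ` under `B`. -/
def Match (B : S → T → Prop) (σ : ℕ → S) (δ : ℕ → T) : Prop :=
  ∃ π ξ, IsINC π ∧ IsINC ξ ∧ Corr B σ π δ ξ

/-- Skipping simulation. -/
def IsSKS {Lbl : Type v} (R : S → S → Prop) (L : S → Lbl) (B : S → S → Prop) : Prop :=
  ∀ s w, B s w →
    L s = L w ∧
    ∀ σ, FullPath R σ → σ 0 = s → ∃ δ, FullPath R δ ∧ δ 0 = w ∧ Match B σ δ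

/-- Well-founded skipping relation. -/
def IsWFSK {Lbl : Type v} (R : S → S → Prop) (L : S → Lbl) (B : S → S → Prop) : Prop :=
  (∀ s w, B s w → L s = L w) ∧
  ∃ (W : Type u) (lt : W → W → Prop) (_ : WellFounded lt)
    (rankt : S → S → W) (rankl : S → S → S → ℕ),
    ∀ s u w, R s u → B s w →
      (∃ v, R w v ∧ B u v) ∨
      (B u w ∧ lt (rankt u w) (rankt s w)) ∨
      (∃ v, R w v ∧ B s v ∧ rankl v s u < rankl w s u) ∨
      (∃ v, (∃ x, R w x ∧ Relation.TransGen R x v) ∧ B u v)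

/-- Reduced well-founded skipping relation. -/
def IsRWFSK {Lbl : Type v} (R : S → S → Prop) (L : S → Lbl) (B : S → S → Prop) : Prop :=
  (∀ s w, B s w → L s = L w) ∧
  ∃ (W : Type u) (lt : W → W → Prop) (_ : WellFounded lt) (rankt : S → S → W),
    ∀ s u w, R s u → B s w →
      (B u w ∧ lt (rankt u w) (rankt s w)) ∨
      (∃ v, Relation.TransGen R w v ∧ B u v)

/-- Nodes of the computation tree of `R` rooted at `s`, represented as the finite
path from the root. -/
def CtreeNode (R : S → S → Prop) (s : S) (l : List S) : Prop :=
  l.head? = some s ∧ l.Chain' R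

/-- Nodes of the tree `ranktCt(M,s,w)`: empty if `¬ B s w`; otherwise the largest
subtree of `ctree(M,s)` all of whose non-root nodes `⟨s,…,x⟩` satisfy `x B w` and
`¬ (x B v)` for every `v` with `w →⁺ v`. -/
def RanktCtNode (R : S → S → Prop) (B : S → S → Prop) (s w : S) (l : List S) : Prop :=
  B s w ∧ CtreeNode R s l ∧
  ∀ x ∈ l.tail, B x w ∧ ∀ v, Relation.TransGen R w v → ¬ B x v

/-- `c` is a child of `p` in the tree with node-predicate `T'`. -/
def ChildRel (T' : List S → Prop) (c p : List S) : Prop :=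
  T' c ∧ T' p ∧ ∃ v, c = p ++ [v]

-- The ordinal `size` of a node of a tree all of whose paths are finite:
-- `size(t,x) = ⋃_{c child of x} (size(t,c)+1)`.
open Classical in
noncomputable def nodeSize (T' : List S → Prop) (l : List S) : Ordinal.{u} :=
  if h : WellFounded (ChildRel T') then (h.apply l).rank else 0

/-- `size(ranktCt(M,s,w))`: the size of the root `⟨s⟩`. -/
noncomputable def treeSize (R : S → S → Prop) (B : S → S → Prop) (s w : S) : Ordinal.{u} :=
  nodeSize (RanktCtNode R B s w) [s]

end Defs

section Aux

variable {S : Type u}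

private def natIter {α : Sort*} (a : α) (f : ℕ → α → α) : ℕ → α
  | 0 => a
  | n+1 => f n (natIter a f n)

private theorem natIter_succ {α : Sort*} (a : α) (f : ℕ → α → α) (n : ℕ) :
    natIter a f (n+1) = f n (natIter a f n) := rfl

private theorem fullPath_transGen {R : S → S → Prop} {δ : ℕ → S} (h : FullPath R δ) :
    ∀ {a b : ℕ}, a < b → Relation.TransGen R (δ a) (δ b) := by
  intro a b hab
  induction b with
  | zero => omega
  | succ b ih =>
    rcases Nat.lt_succ_iff_lt_or_eq.mp hab with h' | rfl
    · exact (ih h').tail (h b)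
    · exact Relation.TransGen.single (h a)

private noncomputable def extPath {R : S → S → Prop} (hR : ∀ s, ∃ u, R s u) (a b : S) :
    ℕ → S :=
  fun n => Nat.casesOn n a (natIter b (fun _ x => Classical.choose (hR x)))

private theorem extPath_full {R : S → S → Prop} (hR : ∀ s, ∃ u, R s u) {a b : S}
    (hab : R a b) : FullPath R (extPath hR a b) := by
  intro n
  cases n with
  | zero => exact hab
  | succ n => exact Classical.choose_spec (hR (natIter b (fun _ x => Classical.choose (hR x)) n))

end Aux

/-- Equivalence: `B` is an SKS on a transition system iff `B` is a WFSK on it. -/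
theorem sks_iff_wfsk {S : Type u} {Lbl : Type v}
    (R : S → S → Prop) (L : S → Lbl) (hR : ∀ s, ∃ u, R s u)
    (B : S → S → Prop) : IsSKS R L B ↔ IsWFSK R L B := by
  constructor
  · -- SKS → WFSK
    intro hS
    refine ⟨fun s w h => (hS s w h).1, S × S,
      (fun p q => p.2 = q.2 ∧ R q.1 p.1 ∧ B q.1 q.2 ∧ B p.1 p.2 ∧
        ∀ v, Relation.TransGen R p.2 v → ¬ B p.1 v), ?_, (fun a b => (a, b)),
      (fun _ _ _ => 0), ?_⟩
    · -- well-foundedness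
      set lt : S × S → S × S → Prop := fun p q => p.2 = q.2 ∧ R q.1 p.1 ∧ B q.1 q.2 ∧ B p.1 p.2 ∧
        ∀ v, Relation.TransGen R p.2 v → ¬ B p.1 v with hltdef
      constructor
      intro p
      by_contra hacc
      have hstep : ∀ x : S × S, ¬ Acc lt x → ∃ y, lt y x ∧ ¬ Acc lt y := by
        intro x hx
        by_contra h
        push_neg at h
        exact hx (Acc.intro x (fun y hy => h y hy))
      let f : ℕ → {x : S × S // ¬ Acc lt x} :=
        natIter ⟨p, hacc⟩ (fun _ q =>
          ⟨Classical.choose (hstep q.1 q.2), (Classical.choose_spec (hstep q.1 q.2)).2⟩)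
      have hlt : ∀ n, lt (f (n+1)).1 (f n).1 :=
        fun n => (Classical.choose_spec (hstep (f n).1 (f n).2)).1
      have hsnd : ∀ n, (f n).1.2 = (f 0).1.2 := by
        intro n
        induction n with
        | zero => rfl
        | succ n ih => rw [(hlt n).1, ih]
      set σ' : ℕ → S := fun n => (f n).1.1 with hσ'def
      have hfp : FullPath R σ' := fun n => (hlt n).2.1
      have hB0 : B (σ' 0) ((f 0).1.2) := (hlt 0).2.2.1
      obtain ⟨δ, hδ, hδ0, π, ξ, ⟨hπm, hπ0⟩, ⟨hξm, hξ0⟩, hcorr⟩ := (hS _ _ hB0).2 σ' hfp rfl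
      have hπ1 : 0 < π 1 := by have := hπm (show (0:ℕ) < 1 by norm_num); omega
      have hξ1 : 0 < ξ 1 := by have := hξm (show (0:ℕ) < 1 by norm_num); omega
      have hBc : B (σ' (π 1)) (δ (ξ 1)) :=
        hcorr 1 (π 1) le_rfl (hπm (show (1:ℕ) < 2 by norm_num))
      have htg : Relation.TransGen R ((f 0).1.2) (δ (ξ 1)) := by
        rw [← hδ0]; exact fullPath_transGen hδ hξ1
      obtain ⟨k, hk⟩ : ∃ k, π 1 = k + 1 := ⟨π 1 - 1, by omega⟩
      have hesc := (hlt k).2.2.2.2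
      rw [← hk] at hesc
      rw [hsnd (π 1)] at hesc
      exact hesc _ htg hBc
    · -- main clause
      intro s u w hRsu hBsw
      obtain ⟨δ, hδ, hδ0, π, ξ, ⟨hπm, hπ0⟩, ⟨hξm, hξ0⟩, hcorr⟩ :=
        (hS s w hBsw).2 (extPath hR s u) (extPath_full hR hRsu) rfl
      have hπ1 : 0 < π 1 := by have := hπm (show (0:ℕ) < 1 by norm_num); omega
      by_cases hπe : π 1 = 1
      · -- u is in segment 1
        have hπ2 : 1 < π 2 := by have := hπm (show (1:ℕ) < 2 by norm_num); omega
        have hBu : B u (δ (ξ 1)) := hcorr 1 1 (by omega) hπ2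
        have hξ1 : 1 ≤ ξ 1 := by have := hξm (show (0:ℕ) < 1 by norm_num); omega
        rcases eq_or_lt_of_le hξ1 with heq | hlt2
        · left
          refine ⟨δ 1, ?_, by rwa [← heq] at hBu⟩
          rw [← hδ0]; exact hδ 0
        · right; right; right
          exact ⟨δ (ξ 1), ⟨δ 1, by rw [← hδ0]; exact hδ 0, fullPath_transGen hδ hlt2⟩, hBu⟩
      · -- u is in segment 0 : B u w
        have hπge : 2 ≤ π 1 := by omega
        have hBuw : B u (δ (ξ 0)) := hcorr 0 1 (by omega) (by simp only [Nat.zero_add]; omega)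
        rw [hξ0, hδ0] at hBuw
        by_cases hesc : ∃ v, Relation.TransGen R w v ∧ B u v
        · obtain ⟨v, htg, hBv⟩ := hesc
          obtain ⟨x, hwx, hxv⟩ := Relation.TransGen.head'_iff.mp htg
          rcases Relation.reflTransGen_iff_eq_or_transGen.mp hxv with rfl | htg'
          · left; exact ⟨v, hwx, hBv⟩
          · right; right; right; exact ⟨v, ⟨x, hwx, htg'⟩, hBv⟩
        · push_neg at hesc
          right; left
          exact ⟨hBuw, rfl, hRsu, hBsw, hBuw, fun v h hb => hesc v h hb⟩
  · -- WFSK → SKS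
    intro hW
    obtain ⟨hL, W, lt, wf, rankt, rankl, hmain⟩ := hW
    intro s w hBsw
    refine ⟨hL s w hBsw, ?_⟩
    intro σ hσ hσ0
    classical
    have hB0 : B (σ 0) w := hσ0 ▸ hBsw
    -- resolve one step
    have H : ∀ (n m : ℕ) (w' : S), rankl w' (σ n) (σ (n+1)) = m → B (σ n) w' →
        ∃ p : S × List S, List.Chain R w' p.2 ∧
          p.1 = (w' :: p.2).getLast (List.cons_ne_nil _ _) ∧
          B (σ (n+1)) p.1 ∧
          (p.2 = [] → lt (rankt (σ (n+1)) w') (rankt (σ n) w')) := by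
      intro n m
      induction m using Nat.strong_induction_on with
      | _ m ih =>
        intro w' hm hB
        rcases hmain (σ n) (σ (n+1)) w' (hσ n) hB with
          ⟨v, hRv, hBv⟩ | ⟨hBu, hlt⟩ | ⟨v, hRv, hBsv, hrk⟩ | ⟨v, ⟨x, hwx, htg⟩, hBuv⟩
        · exact ⟨(v, [v]), List.Chain.cons hRv List.Chain.nil, by simp, hBv, by simp⟩
        · exact ⟨(w', []), List.Chain.nil, rfl, hBu, fun _ => hlt⟩
        · obtain ⟨p, h1, h2, h3, _⟩ :=
            ih (rankl v (σ n) (σ (n+1))) (hm ▸ hrk) v rfl hBsv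
          refine ⟨(p.1, v :: p.2), List.Chain.cons hRv h1, ?_, h3, by simp⟩
          rw [List.getLast_cons (List.cons_ne_nil _ _)]
          exact h2
        · obtain ⟨l, hch, hlast⟩ := List.exists_isChain_cons_of_relationReflTransGen htg.to_reflTransGen
          refine ⟨(v, x :: l), List.Chain.cons hwx hch, ?_, hBuv, by simp⟩
          rw [List.getLast_cons (List.cons_ne_nil _ _)]
          exact hlast.symm
    have resolve : ∀ (n : ℕ) (w' : S), ∃ p : S × List S, B (σ n) w' →
        List.Chain R w' p.2 ∧
        p.1 = (w' :: p.2).getLast (List.cons_ne_nil _ _) ∧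
        B (σ (n+1)) p.1 ∧
        (p.2 = [] → lt (rankt (σ (n+1)) w') (rankt (σ n) w')) := by
      intro n w'
      by_cases hB : B (σ n) w'
      · obtain ⟨p, hp⟩ := H n (rankl w' (σ n) (σ (n+1))) w' rfl hB
        exact ⟨p, fun _ => hp⟩
      · exact ⟨(w', []), fun h => absurd h hB⟩
    choose F hF using resolve
    -- the anchor sequence
    let Wn : ℕ → S := natIter w (fun n x => (F n x).1)
    have hWnS : ∀ n, Wn (n+1) = (F n (Wn n)).1 := fun _ => rfl
    let bl : ℕ → List S := fun n => (F n (Wn n)).2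
    have hInv : ∀ n, B (σ n) (Wn n) := by
      intro n
      induction n with
      | zero => exact hB0
      | succ n ihn => rw [hWnS]; exact (hF n (Wn n) ihn).2.2.1
    have hChain : ∀ n, List.Chain R (Wn n) (bl n) := fun n => (hF n (Wn n) (hInv n)).1
    have hLastEq : ∀ n, Wn (n+1) = ((Wn n) :: bl n).getLast (List.cons_ne_nil _ _) :=
      fun n => (hF n (Wn n) (hInv n)).2.1
    have hRk : ∀ n, bl n = [] → lt (rankt (σ (n+1)) (Wn n)) (rankt (σ n) (Wn n)) :=
      fun n => (hF n (Wn n) (hInv n)).2.2.2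
    have hWconst' : ∀ n, bl n = [] → Wn (n+1) = Wn n := by
      intro n h
      have h2 := hLastEq n
      rw [h] at h2
      exact h2
    -- infinitely many nonempty blocks
    have hInfB : ∀ n, ∃ m, n ≤ m ∧ bl m ≠ [] := by
      intro n
      by_contra h
      push_neg at h
      have hconst : ∀ k, Wn (n + k) = Wn n := by
        intro k
        induction k with
        | zero => rfl
        | succ k ihk =>
          rw [show n + (k+1) = (n+k) + 1 by omega, hWconst' (n+k) (h _ (Nat.le_add_right _ _)), ihk]
      have hdesc : ∀ k, lt (rankt (σ (n+k+1)) (Wn n)) (rankt (σ (n+k)) (Wn n)) := by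
        intro k
        have := hRk (n+k) (h _ (Nat.le_add_right _ _))
        rwa [hconst k] at this
      obtain ⟨x, ⟨k, hkx⟩, hmin⟩ :=
        wf.has_min (Set.range fun k => rankt (σ (n+k)) (Wn n)) ⟨_, 0, rfl⟩
      exact hmin _ ⟨k+1, rfl⟩ (hkx ▸ hdesc k)
    -- cumulative lengths and finite approximations of δ
    let cum : ℕ → ℕ := natIter 0 (fun n c => c + (bl n).length)
    have hcumS : ∀ n, cum (n+1) = cum n + (bl n).length := fun _ => rfl
    have hcmono : ∀ {m n : ℕ}, m ≤ n → cum m ≤ cum n := by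
      intro m n h
      induction n with
      | zero =>
        have : m = 0 := by omega
        subst this
        exact le_rfl
      | succ n ihn =>
        rcases Nat.lt_succ_iff_lt_or_eq.mp (Nat.lt_succ_of_le h) with h' | rfl
        · rw [hcumS]; have := ihn (by omega); omega
        · rfl
    let Ln : ℕ → List S := natIter [w] (fun n l => l ++ bl n)
    have hLnS : ∀ n, Ln (n+1) = Ln n ++ bl n := fun _ => rfl
    have hLen : ∀ n, (Ln n).length = cum n + 1 := by
      intro n
      induction n with
      | zero => rfl
      | succ n ihn => rw [hLnS, List.length_append, ihn, hcumS]; omega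
    have hLnNe : ∀ n, Ln n ≠ [] := by
      intro n h
      have := hLen n
      rw [h] at this
      simp at this
    have hLast : ∀ n, (Ln n).getLast? = some (Wn n) := by
      intro n
      induction n with
      | zero => rfl
      | succ n ihn =>
        rw [hLnS, List.getLast?_append]
        rcases h : bl n with _ | ⟨b, t⟩
        · rw [hWconst' n h, ← ihn]; simp
        · have h2 := hLastEq n
          rw [h, List.getLast_cons (List.cons_ne_nil _ _)] at h2
          rw [List.getLast?_eq_getLast (l := b :: t) (List.cons_ne_nil _ _)]
          simp [← h2]
    have hChain' : ∀ n, (Ln n).Chain' R := by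
      intro n
      induction n with
      | zero => exact List.isChain_singleton w
      | succ n ihn =>
        rw [hLnS]
        refine List.IsChain.append ihn ((show List.Chain' R (Wn n :: bl n) from hChain n).tail) ?_
        intro x hx y hy
        rw [hLast n] at hx
        cases hx
        rcases h : bl n with _ | ⟨b, t⟩
        · rw [h] at hy; simp at hy
        · rw [h] at hy
          simp at hy
          cases hy
          have := hChain n
          rw [h, List.Chain, List.isChain_cons_cons] at this
          exact this.1
    have hGrow : ∀ k, ∃ n, k < cum n := by
      intro k
      induction k with
      | zero =>
        obtain ⟨m, _, hm⟩ := hInfB 0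
        exact ⟨m+1, by rw [hcumS]; have := List.length_pos_iff.mpr hm; omega⟩
      | succ k ihk =>
        obtain ⟨n, hn⟩ := ihk
        obtain ⟨m, hnm, hm⟩ := hInfB n
        refine ⟨m+1, ?_⟩
        rw [hcumS]
        have h1 := hcmono hnm
        have := List.length_pos_iff.mpr hm
        omega
    let δ : ℕ → S := fun k => (Ln (Nat.find (hGrow k))).getD k s
    have hPre : ∀ m n, m ≤ n → ∃ t, Ln n = Ln m ++ t := by
      intro m n h
      induction n with
      | zero =>
        have : m = 0 := by omega
        subst this
        exact ⟨[], by simp⟩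
      | succ n ihn =>
        rcases Nat.lt_succ_iff_lt_or_eq.mp (Nat.lt_succ_of_le h) with h' | rfl
        · obtain ⟨t, ht⟩ := ihn (by omega)
          exact ⟨t ++ bl n, by rw [hLnS, ht, List.append_assoc]⟩
        · exact ⟨[], by simp⟩
    have hδeq : ∀ n k, k < (Ln n).length → δ k = (Ln n).getD k s := by
      intro n k hk
      have hkN : k < (Ln (Nat.find (hGrow k))).length := by
        rw [hLen]
        have := Nat.find_spec (hGrow k)
        omega
      rcases le_total n (Nat.find (hGrow k)) with h | h
      · obtain ⟨t, ht⟩ := hPre n _ h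
        show (Ln (Nat.find (hGrow k))).getD k s = _
        rw [ht, List.getD_append _ _ _ _ hk]
      · obtain ⟨t, ht⟩ := hPre _ n h
        show (Ln (Nat.find (hGrow k))).getD k s = _
        rw [ht, List.getD_append _ _ _ _ hkN]
    have hFull : FullPath R δ := by
      intro k
      obtain ⟨n, hn⟩ := hGrow (k+1)
      have hl : k + 1 < (Ln n).length := by rw [hLen]; omega
      rw [hδeq n k (by omega), hδeq n (k+1) hl,
        List.getD_eq_getElem _ _ (by omega), List.getD_eq_getElem _ _ hl]
      have := List.isChain_iff_getElem.mp (hChain' n) k (by omega)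
      simpa using this
    have hδ0 : δ 0 = w := by
      rw [hδeq 0 0 (by rw [hLen]; omega)]
      rfl
    have hδcum : ∀ n, δ (cum n) = Wn n := by
      intro n
      have hlt' : cum n < (Ln n).length := by rw [hLen]; omega
      rw [hδeq n (cum n) hlt', List.getD_eq_getElem _ _ hlt']
      have h1 := List.getLast?_eq_getLast (hLnNe n)
      rw [hLast n] at h1
      have h2 : Wn n = (Ln n).getLast (hLnNe n) := by
        exact Option.some.inj h1
      rw [h2, List.getLast_eq_getElem]
      congr 1
      rw [hLen]
      omega
    -- the index sequences
    let π : ℕ → ℕ := natIter 0 (fun _ p => Nat.find (hInfB p) + 1)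
    have hπS : ∀ i, π (i+1) = Nat.find (hInfB (π i)) + 1 := fun _ => rfl
    have hπspec : ∀ i, π i ≤ Nat.find (hInfB (π i)) ∧ bl (Nat.find (hInfB (π i))) ≠ [] :=
      fun i => Nat.find_spec (hInfB (π i))
    have hπmono : StrictMono π := by
      apply strictMono_nat_of_lt_succ
      intro i
      rw [hπS]
      have := (hπspec i).1
      omega
    have hblEmpty : ∀ i n, π i ≤ n → n + 1 < π (i+1) → bl n = [] := by
      intro i n h1 h2
      rw [hπS] at h2
      have := Nat.find_min (hInfB (π i)) (show n < Nat.find (hInfB (π i)) by omega)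
      push_neg at this
      exact this h1
    have hWseg : ∀ i n, π i ≤ n → n < π (i+1) → Wn n = Wn (π i) := by
      intro i n h1 h2
      obtain ⟨k, rfl⟩ : ∃ k, n = π i + k := ⟨n - π i, by omega⟩
      clear h1
      induction k with
      | zero => rfl
      | succ k ihk =>
        rw [show π i + (k+1) = (π i + k) + 1 by omega,
          hWconst' (π i + k) (hblEmpty i (π i + k) (by omega) (by omega)),
          ihk (by omega)]
    refine ⟨δ, hFull, hδ0, π, fun i => cum (π i), ⟨hπmono, rfl⟩,
      ⟨?_, rfl⟩, ?_⟩
    · apply strictMono_nat_of_lt_succ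
      intro i
      have h1 : π (i+1) = Nat.find (hInfB (π i)) + 1 := hπS i
      have h2 := hcmono (hπspec i).1
      have h3 := List.length_pos_iff.mpr (hπspec i).2
      rw [h1, hcumS]
      omega
    · intro i n h1 h2
      rw [hδcum (π i), ← hWseg i n h1 h2]
      exact hInv n
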